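/- arXiv:1202.2402 — 4 statements merged into one kernel-verified Lean document; each statement's English description precedes it below -/
import Mathlib

section
/- For suitably integrable f, g of exponential squared order and s > 0, L₂{f ⋆ g}(s) = L₂{f}(s) · L₂{g}(s). -/
open MeasureTheory Real Filter

private lemma det_aux' (a b : ℝ) :
    ContinuousLinearMap.det
      (((a • ContinuousLinearMap.fst ℝ ℝ ℝ + b • ContinuousLinearMap.snd ℝ ℝ ℝ)).prod
        (ContinuousLinearMap.snd ℝ ℝ ℝ)) = a := by
  rw [ContinuousLinearMap.det]
  rw [← LinearMap.det_toMatrix (Module.Basis.finTwoProd ℝ)]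
  rw [Matrix.det_fin_two]
  simp [LinearMap.toMatrix_apply, Module.Basis.finTwoProd]

private noncomputable def Amap' (p : ℝ × ℝ) : (ℝ × ℝ) →L[ℝ] (ℝ × ℝ) :=
  (((p.1 / Real.sqrt (p.1^2 + p.2^2)) • ContinuousLinearMap.fst ℝ ℝ ℝ +
    (p.2 / Real.sqrt (p.1^2 + p.2^2)) • ContinuousLinearMap.snd ℝ ℝ ℝ)).prod
    (ContinuousLinearMap.snd ℝ ℝ ℝ)

private lemma hderiv' (p : ℝ × ℝ) (hp : 0 < p.1) :
    HasFDerivAt (fun q : ℝ × ℝ => (Real.sqrt (q.1^2 + q.2^2), q.2)) (Amap' p) p := by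
  have hq : HasFDerivAt (fun q : ℝ × ℝ => q.1^2 + q.2^2)
      ((p.1 • ContinuousLinearMap.fst ℝ ℝ ℝ + p.1 • ContinuousLinearMap.fst ℝ ℝ ℝ) +
       (p.2 • ContinuousLinearMap.snd ℝ ℝ ℝ + p.2 • ContinuousLinearMap.snd ℝ ℝ ℝ)) p := by
    have := ((hasFDerivAt_fst (𝕜 := ℝ) (p := p)).mul hasFDerivAt_fst).add
        ((hasFDerivAt_snd (𝕜 := ℝ) (p := p)).mul hasFDerivAt_snd)
    rw [show (fun q : ℝ × ℝ => q.1^2 + q.2^2) = fun q => q.1 * q.1 + q.2 * q.2 from by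
      funext q; ring]
    exact this
  have hpos : 0 < p.1^2 + p.2^2 := by positivity
  have hsq : HasDerivAt Real.sqrt (1 / (2 * Real.sqrt (p.1^2 + p.2^2))) (p.1^2 + p.2^2) :=
    Real.hasDerivAt_sqrt hpos.ne'
  have h1 := hsq.comp_hasFDerivAt p hq
  have h2 : HasFDerivAt (fun q : ℝ × ℝ => q.2) (ContinuousLinearMap.snd ℝ ℝ ℝ) p :=
    hasFDerivAt_snd
  refine (HasFDerivAt.prodMk h1 h2).congr_fderiv ?_
  unfold Amap'
  have ht : Real.sqrt (p.1^2 + p.2^2) ≠ 0 := (Real.sqrt_pos.2 hpos).ne'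
  ext v <;> simp [ContinuousLinearMap.prod_apply] <;> field_simp <;> ring

theorem L2_transform_convolution (f g : ℝ → ℝ) (s : ℝ) (hs : 0 < s)
    (hforder : Tendsto (fun x => f x * Real.exp (-(x^2))) atTop (nhds 0))
    (hgorder : Tendsto (fun x => g x * Real.exp (-(x^2))) atTop (nhds 0))
    (hfint : IntegrableOn (fun x => x * Real.exp (-(x^2 * s^2)) * f x) (Set.Ioi 0))
    (hgint : IntegrableOn (fun x => x * Real.exp (-(x^2 * s^2)) * g x) (Set.Ioi 0))
    (hcint : IntegrableOn (fun t => t * Real.exp (-(t^2 * s^2)) *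
      (∫ x in (0:ℝ)..t, x * f (Real.sqrt (t^2 - x^2)) * g x)) (Set.Ioi 0)) :
    ∫ t in Set.Ioi (0:ℝ), t * Real.exp (-(t^2 * s^2)) *
        (∫ x in (0:ℝ)..t, x * f (Real.sqrt (t^2 - x^2)) * g x)
      = (∫ x in Set.Ioi (0:ℝ), x * Real.exp (-(x^2 * s^2)) * f x) *
        (∫ x in Set.Ioi (0:ℝ), x * Real.exp (-(x^2 * s^2)) * g x) := by
  set F1 : ℝ → ℝ := fun y => y * Real.exp (-(y^2 * s^2)) * f y with hF1
  set G1 : ℝ → ℝ := fun x => x * Real.exp (-(x^2 * s^2)) * g x with hG1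
  set G : ℝ → ℝ → ℝ := fun t x =>
    t * Real.exp (-(t^2 * s^2)) * (x * f (Real.sqrt (t^2 - x^2)) * g x) with hG
  set Φ : ℝ × ℝ → ℝ × ℝ := fun p => (Real.sqrt (p.1^2 + p.2^2), p.2) with hΦ
  set S : Set (ℝ × ℝ) := Set.Ioi 0 ×ˢ Set.Ioi 0 with hSdef
  set T : Set (ℝ × ℝ) := {p | 0 < p.2 ∧ p.2 < p.1} with hTdef
  have hS : MeasurableSet S := measurableSet_Ioi.prod measurableSet_Ioi
  have hT : MeasurableSet T :=
    (measurableSet_lt measurable_const measurable_snd).inter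
      (measurableSet_lt measurable_snd measurable_fst)
  have hDeriv : ∀ p ∈ S, HasFDerivWithinAt Φ (Amap' p) S p := fun p hp =>
    (hderiv' p hp.1).hasFDerivWithinAt
  have hinj : Set.InjOn Φ S := by
    rintro ⟨y, x⟩ ⟨hy, hx⟩ ⟨y', x'⟩ ⟨hy', hx'⟩ h
    have h2 : x = x' := congrArg Prod.snd h
    have h1 : Real.sqrt (y^2 + x^2) = Real.sqrt (y'^2 + x'^2) := congrArg Prod.fst h
    have hsq : y^2 + x^2 = y'^2 + x'^2 := by
      have h3 := congrArg (fun z : ℝ => z^2) h1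
      rwa [Real.sq_sqrt (by positivity : (0:ℝ) ≤ y^2 + x^2),
        Real.sq_sqrt (by positivity : (0:ℝ) ≤ y'^2 + x'^2)] at h3
    have hy0 : (0:ℝ) < y := hy
    have hy0' : (0:ℝ) < y' := hy'
    have hyy : y^2 = y'^2 := by rw [h2] at hsq; linarith
    have : y = y' := by
      rw [← Real.sqrt_sq hy0.le, ← Real.sqrt_sq hy0'.le, hyy]
    simp [Prod.ext_iff, this, h2]
  have himg : Φ '' S = T := by
    ext ⟨t, x⟩
    constructor
    · rintro ⟨⟨y, x'⟩, ⟨hy, hx⟩, heq⟩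
      simp only [hΦ] at heq
      injection heq with he1 he2
      subst he1; subst he2
      have hy0 : (0:ℝ) < y := hy
      have hx0 : (0:ℝ) < x' := hx
      refine ⟨hx0, ?_⟩
      have h1 : Real.sqrt (x'^2) < Real.sqrt (y^2 + x'^2) :=
        Real.sqrt_lt_sqrt (sq_nonneg x') (by nlinarith)
      rwa [Real.sqrt_sq hx0.le] at h1
    · rintro ⟨hx, hxt⟩
      have ht0 : (0:ℝ) < t := lt_trans hx hxt
      have hts : (0:ℝ) < t^2 - x^2 := by nlinarith
      refine ⟨(Real.sqrt (t^2 - x^2), x), ⟨Real.sqrt_pos.2 hts, hx⟩, ?_⟩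
      have : Real.sqrt (Real.sqrt (t^2 - x^2) ^ 2 + x^2) = t := by
        rw [Real.sq_sqrt hts.le]
        rw [show t^2 - x^2 + x^2 = t^2 by ring, Real.sqrt_sq ht0.le]
      simp [hΦ, this]
  have hpull : Set.EqOn (fun p : ℝ × ℝ => |(Amap' p).det| • G (Φ p).1 (Φ p).2)
      (fun p : ℝ × ℝ => F1 p.1 * G1 p.2) S := by
    rintro ⟨y, x⟩ ⟨hy, hx⟩
    have hy0 : (0:ℝ) < y := hy
    have hx0 : (0:ℝ) < x := hx
    have hpos : (0:ℝ) < y^2 + x^2 := by positivity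
    have ht0 : (0:ℝ) < Real.sqrt (y^2 + x^2) := Real.sqrt_pos.2 hpos
    have hdet : (Amap' (y, x)).det = y / Real.sqrt (y^2 + x^2) := det_aux' _ _
    simp only [hΦ, hG, hF1, hG1]
    rw [hdet]
    have hsub : Real.sqrt (y^2 + x^2) ^ 2 - x^2 = y^2 := by
      rw [Real.sq_sqrt hpos.le]; ring
    rw [hsub, Real.sqrt_sq hy0.le]
    have hexp : Real.exp (-(Real.sqrt (y^2 + x^2) ^ 2 * s^2))
        = Real.exp (-(y^2 * s^2)) * Real.exp (-(x^2 * s^2)) := by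
      rw [← Real.exp_add, Real.sq_sqrt hpos.le]; ring_nf
    rw [hexp]
    rw [smul_eq_mul, abs_of_pos (div_pos hy0 ht0)]
    field_simp
  -- integrability of the product function on S
  have hprod_int : IntegrableOn (fun p : ℝ × ℝ => F1 p.1 * G1 p.2) S := by
    rw [IntegrableOn, hSdef, Measure.volume_eq_prod, ← Measure.prod_restrict]
    exact Integrable.mul_prod hfint hgint
  -- transfer through the change of variables
  have hGT_int : IntegrableOn (fun q : ℝ × ℝ => G q.1 q.2) T := by
    rw [← himg,
      integrableOn_image_iff_integrableOn_abs_det_fderiv_smul volume hS hDeriv hinj]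
    exact hprod_int.congr_fun hpull.symm hS
  have hGT_val : (∫ q in T, G q.1 q.2)
      = (∫ y in Set.Ioi (0:ℝ), F1 y) * (∫ x in Set.Ioi (0:ℝ), G1 x) := by
    rw [← himg, integral_image_eq_integral_abs_det_fderiv_smul volume hS hDeriv hinj,
      setIntegral_congr_fun hS hpull]
    have hmeq : (volume : Measure (ℝ × ℝ)).restrict S
        = ((volume : Measure ℝ).restrict (Set.Ioi 0)).prod
            ((volume : Measure ℝ).restrict (Set.Ioi 0)) := by
      rw [hSdef, Measure.volume_eq_prod, Measure.prod_restrict]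
    rw [hmeq]
    exact integral_prod_mul F1 G1
  -- now handle the left-hand side via Fubini
  set H : ℝ → ℝ → ℝ := fun t x => (Set.Ioo 0 t).indicator (fun x => G t x) x with hHdef
  have hstep1 : Set.EqOn
      (fun t => t * Real.exp (-(t^2 * s^2)) *
        (∫ x in (0:ℝ)..t, x * f (Real.sqrt (t^2 - x^2)) * g x))
      (fun t => ∫ x, H t x) (Set.Ioi 0) := by
    intro t ht
    have ht0 : (0:ℝ) < t := ht
    simp only [hHdef]
    rw [MeasureTheory.integral_indicator measurableSet_Ioo]
    rw [intervalIntegral.integral_of_le ht0.le, MeasureTheory.integral_Ioc_eq_integral_Ioo]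
    show t * Real.exp (-(t^2 * s^2)) * _
      = ∫ x in Set.Ioo (0:ℝ) t, t * Real.exp (-(t^2 * s^2)) * (x * f (Real.sqrt (t^2 - x^2)) * g x)
    rw [MeasureTheory.integral_const_mul]
  have huncurry : (Function.uncurry H) = T.indicator (fun q : ℝ × ℝ => G q.1 q.2) := by
    funext p
    simp only [Function.uncurry, hHdef, hTdef, Set.indicator_apply, Set.mem_Ioo,
      Set.mem_setOf_eq]
  have hmeq2 : ((volume : Measure ℝ).restrict (Set.Ioi 0)).prod (volume : Measure ℝ)
      = (volume : Measure (ℝ × ℝ)).restrict (Set.Ioi 0 ×ˢ Set.univ) := by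
    rw [Measure.volume_eq_prod, ← Measure.prod_restrict, Measure.restrict_univ]
  have hHint : Integrable (Function.uncurry H)
      (((volume : Measure ℝ).restrict (Set.Ioi 0)).prod volume) := by
    rw [huncurry, hmeq2]
    exact ((integrable_indicator_iff hT).2 hGT_int).restrict
  have hTsub : T ∩ (Set.Ioi (0:ℝ) ×ˢ (Set.univ : Set ℝ)) = T := by
    apply Set.inter_eq_self_of_subset_left
    rintro ⟨t, x⟩ ⟨hx, hxt⟩
    exact ⟨lt_trans hx hxt, Set.mem_univ _⟩
  calc ∫ t in Set.Ioi (0:ℝ), t * Real.exp (-(t^2 * s^2)) *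
        (∫ x in (0:ℝ)..t, x * f (Real.sqrt (t^2 - x^2)) * g x)
      = ∫ t in Set.Ioi (0:ℝ), ∫ x, H t x :=
        setIntegral_congr_fun measurableSet_Ioi hstep1
    _ = ∫ p, Function.uncurry H p
          ∂(((volume : Measure ℝ).restrict (Set.Ioi 0)).prod volume) :=
        MeasureTheory.integral_integral hHint
    _ = ∫ q in T, G q.1 q.2 := by
        rw [huncurry, hmeq2, MeasureTheory.integral_indicator hT,
          Measure.restrict_restrict hT, hTsub]
    _ = _ := hGT_val
end

section
/- Let g(x) = e^{x²/2} and define the n-fold convolution g^{⋆n} = g ⋆ g ⋆ ⋯ ⋆ g (n factors) with respect to the convolution (f ⋆ g)(t) = ∫₀^t x·f(√(t²−x²))·g(x) dx. Then for all n ≥ 1 and x ≥ 0, g^{⋆n}(x) = x^{2(n−1)} e^{x²/2} / (2^{n−1}·(n−1)!). -/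
open MeasureTheory Real

/-- The L₂-convolution. -/
noncomputable def L2conv (f g : ℝ → ℝ) : ℝ → ℝ :=
  fun t => ∫ x in (0:ℝ)..t, x * f (Real.sqrt (t^2 - x^2)) * g x

/-- n-fold convolution power: `convIter g 0 = g` corresponds to `g^{⋆1}`,
and `convIter g n` corresponds to `g^{⋆(n+1)}`. -/
noncomputable def convIter (g : ℝ → ℝ) : ℕ → ℝ → ℝ
  | 0 => g
  | (n+1) => L2conv (convIter g n) g

lemma hasDerivAt_F (t : ℝ) (n : ℕ) (x : ℝ) :
    HasDerivAt (fun x : ℝ => -(t^2 - x^2)^(n+1) / (2*(n+1))) (x * (t^2 - x^2)^n) x := by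
  have h1 : HasDerivAt (fun x : ℝ => t^2 - x^2) (-(2*x)) x := by
    simpa using (hasDerivAt_pow 2 x).const_sub (t^2)
  have h3 := ((h1.pow (n+1)).neg.div_const (2*(n+1)))
  refine h3.congr_deriv ?_
  have : ((n:ℝ)+1) ≠ 0 := by positivity
  push_cast
  field_simp

lemma integral_x_pow (t : ℝ) (n : ℕ) :
    (∫ x in (0:ℝ)..t, x * (t^2 - x^2)^n) = t^(2*(n+1)) / (2*(n+1)) := by
  rw [intervalIntegral.integral_eq_sub_of_hasDerivAt (fun x _ => hasDerivAt_F t n x)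
    (((continuous_id.mul ((continuous_const.sub (continuous_pow 2)).pow n)).intervalIntegrable 0 t))]
  have h0 : (0:ℝ)^2 = 0 := by norm_num
  rw [show t^2 - t^2 = (0:ℝ) by ring, show t^2 - 0^2 = t^2 by ring,
    zero_pow (Nat.succ_ne_zero n), ← pow_mul]
  ring

lemma aux (n : ℕ) : ∀ x : ℝ, 0 ≤ x →
    convIter (fun y => Real.exp (y^2/2)) n x
      = x^(2*n) * Real.exp (x^2/2) / (2^n * n.factorial) := by
  induction n with
  | zero => intro x hx; simp [convIter]
  | succ n ih =>
    intro t ht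
    have key : ∀ x ∈ Set.uIcc (0:ℝ) t,
        x * convIter (fun y => Real.exp (y^2/2)) n (Real.sqrt (t^2 - x^2)) * Real.exp (x^2/2)
          = (Real.exp (t^2/2) / (2^n * n.factorial)) * (x * (t^2 - x^2)^n) := by
      intro x hxmem
      rw [Set.uIcc_of_le ht] at hxmem
      obtain ⟨hx0, hxt⟩ := hxmem
      have hle : x^2 ≤ t^2 := pow_le_pow_left₀ hx0 hxt 2
      have hnn : 0 ≤ t^2 - x^2 := by linarith
      rw [ih _ (Real.sqrt_nonneg _)]
      rw [pow_mul, Real.sq_sqrt hnn]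
      have hE : Real.exp ((t^2-x^2)/2) * Real.exp (x^2/2) = Real.exp (t^2/2) := by
        rw [← Real.exp_add]; ring_nf
      rw [← hE]; ring
    show L2conv _ _ t = _
    unfold L2conv
    rw [intervalIntegral.integral_congr key, intervalIntegral.integral_const_mul,
      integral_x_pow]
    rw [Nat.factorial_succ]
    have h1 : ((n:ℝ)+1) ≠ 0 := by positivity
    have h2 : (2:ℝ)^n ≠ 0 := by positivity
    have h3 : ((n.factorial : ℝ)) ≠ 0 := by positivity
    push_cast
    field_simp
    ring

theorem conv_power_exp_sq (n : ℕ) (hn : 1 ≤ n) (x : ℝ) (hx : 0 ≤ x) :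
    convIter (fun y => Real.exp (y^2 / 2)) (n - 1) x
      = x^(2*(n-1)) * Real.exp (x^2 / 2) / (2^(n-1) * (n-1).factorial) := by
  exact aux (n-1) x hx
end

section
/- The function u(x) = 1 + Σ_{n≥1} x^{2n−2}·e^{x²/2} / (n!·2^{n−1}·(n−1)!) is of exponential squared order: u(x)·e^{−x²} → 0 as x → ∞. -/
open Real Filter

lemma exp_tsum_div (y : ℝ) : Real.exp y = ∑' n : ℕ, y ^ n / n.factorial := by
  rw [Real.exp_eq_exp_ℝ, NormedSpace.exp_eq_tsum_div]

lemma fact_bound (n : ℕ) : (2 * n).factorial ≤ 4 ^ n * ((n + 1).factorial * n.factorial) := by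
  have h1 : (2 * n).choose n * (n.factorial * n.factorial) = (2 * n).factorial := by
    have := Nat.choose_mul_factorial_mul_factorial (by omega : n ≤ 2 * n)
    simpa [two_mul, mul_assoc] using this
  have h2 : (2 * n).choose n ≤ 4 ^ n := by
    calc (2 * n).choose n ≤ ∑ k ∈ Finset.range (2 * n + 1), (2 * n).choose k :=
          Finset.single_le_sum (fun k _ => Nat.zero_le _) (by simp; omega)
      _ = 2 ^ (2 * n) := Nat.sum_range_choose (2 * n)
      _ = 4 ^ n := by rw [pow_mul]; norm_num
  calc (2 * n).factorial = (2 * n).choose n * (n.factorial * n.factorial) := h1.symm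
    _ ≤ 4 ^ n * (n.factorial * n.factorial) := by gcongr
    _ ≤ 4 ^ n * ((n + 1).factorial * n.factorial) :=
        Nat.mul_le_mul_left _ (Nat.mul_le_mul_right _ (Nat.factorial_le (by omega)))

theorem solution_exponential_squared_order :
    Tendsto (fun x : ℝ =>
        (1 + ∑' n : ℕ, x^(2*n) * Real.exp (x^2/2) /
          ((n+1).factorial * 2^n * n.factorial)) * Real.exp (-(x^2)))
      atTop (nhds 0) := by
  -- notation
  set F : ℝ → ℝ := fun x =>
    (1 + ∑' n : ℕ, x^(2*n) * Real.exp (x^2/2) /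
      ((n+1).factorial * 2^n * n.factorial)) * Real.exp (-(x^2)) with hF
  -- upper bounding function
  have key : ∀ x : ℝ, 0 ≤ x →
      (∑' n : ℕ, x^(2*n) * Real.exp (x^2/2) /
        ((n+1).factorial * 2^n * n.factorial)) ≤ Real.exp (x^2/2 + Real.sqrt 2 * x) := by
    intro x hx
    set f : ℕ → ℝ := fun n => x^(2*n) * Real.exp (x^2/2) /
      ((n+1).factorial * 2^n * n.factorial) with hf
    set g : ℕ → ℝ := fun m => Real.exp (x^2/2) * ((Real.sqrt 2 * x) ^ m / m.factorial) with hg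
    have hfg : ∀ n, f n ≤ g (2 * n) := by
      intro n
      have hx2 : x ^ (2 * n) = (x ^ 2) ^ n := by rw [pow_mul]
      have hs : (Real.sqrt 2 * x) ^ (2 * n) = 2 ^ n * (x ^ 2) ^ n := by
        rw [mul_pow, pow_mul, pow_mul, Real.sq_sqrt (by norm_num : (0:ℝ) ≤ 2)]
      have hfacR : ((2 * n).factorial : ℝ) ≤ 4 ^ n * ((n + 1).factorial * n.factorial) := by
        exact_mod_cast fact_bound n
      have hpos : (0:ℝ) < ((n+1).factorial * 2^n * n.factorial : ℝ) := by positivity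
      have h2f : (0:ℝ) < ((2*n).factorial : ℝ) := by positivity
      rw [hf, hg]
      simp only
      rw [div_le_iff₀ hpos, hs,
        show Real.exp (x^2/2) * (2 ^ n * (x ^ 2) ^ n / ((2*n).factorial : ℝ)) *
            (((n+1).factorial : ℝ) * 2 ^ n * n.factorial)
          = Real.exp (x^2/2) * (2 ^ n * (x ^ 2) ^ n) *
            (((n+1).factorial : ℝ) * 2 ^ n * n.factorial) / ((2*n).factorial : ℝ) from by ring,
        le_div_iff₀ h2f, hx2]
      calc (x ^ 2) ^ n * Real.exp (x^2/2) * ((2*n).factorial : ℝ)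
          ≤ (x ^ 2) ^ n * Real.exp (x^2/2) * (4 ^ n * ((n + 1).factorial * n.factorial)) := by
            gcongr
        _ = Real.exp (x^2/2) * (2 ^ n * (x ^ 2) ^ n) *
            (((n+1).factorial : ℝ) * 2 ^ n * n.factorial) := by
            have : (4:ℝ) ^ n = 2 ^ n * 2 ^ n := by
              rw [← mul_pow]; norm_num
            rw [this]; ring
    have hg0 : ∀ m, 0 ≤ g m := by
      intro m
      have : (0:ℝ) ≤ Real.sqrt 2 * x := by positivity
      positivity
    have hgsum : Summable g :=
      (Real.summable_pow_div_factorial (Real.sqrt 2 * x)).mul_left _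
    have hfsum : Summable f := by
      refine Summable.of_nonneg_of_le (fun n => by rw [hf]; dsimp only; rw [pow_mul]; positivity) hfg ?_
      exact hgsum.comp_injective (mul_right_injective₀ (two_ne_zero))
    have hineq : (∑' n, f n) ≤ ∑' m, g m :=
      Summable.tsum_le_tsum_of_inj (fun n => 2 * n) (mul_right_injective₀ (two_ne_zero))
        (fun c _ => hg0 c) hfg hfsum hgsum
    have hgsum_val : (∑' m, g m) = Real.exp (x^2/2 + Real.sqrt 2 * x) := by
      rw [tsum_mul_left, ← exp_tsum_div, ← Real.exp_add]
    rw [← hgsum_val]; exact hineq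
  -- nonnegativity
  have hnonneg : ∀ x : ℝ, 0 ≤ F x := by
    intro x
    apply mul_nonneg _ (Real.exp_pos _).le
    have : (0:ℝ) ≤ ∑' n : ℕ, x^(2*n) * Real.exp (x^2/2) /
        ((n+1).factorial * 2^n * n.factorial) :=
      tsum_nonneg fun n => by rw [pow_mul]; positivity
    linarith
  -- upper bound function tends to 0
  have hupper : Tendsto (fun x : ℝ =>
      Real.exp (-(x^2)) + Real.exp (Real.sqrt 2 * x - x^2/2)) atTop (nhds 0) := by
    have h1 : Tendsto (fun x : ℝ => Real.exp (-(x^2))) atTop (nhds 0) := by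
      apply Real.tendsto_exp_atBot.comp
      apply tendsto_neg_atBot_iff.mpr
      exact tendsto_pow_atTop (by norm_num)
    have h2 : Tendsto (fun x : ℝ => Real.exp (Real.sqrt 2 * x - x^2/2)) atTop (nhds 0) := by
      apply Real.tendsto_exp_atBot.comp
      have : (fun x : ℝ => Real.sqrt 2 * x - x^2/2) = fun x => x * (Real.sqrt 2 - x / 2) := by
        funext x; ring
      rw [this]
      apply Tendsto.atTop_mul_atBot₀ tendsto_id
      apply tendsto_atBot_add_const_left
      apply tendsto_neg_atBot_iff.mpr
      exact (tendsto_id.atTop_div_const (by norm_num))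
    simpa using h1.add h2
  -- squeeze
  rw [hF]
  apply tendsto_of_tendsto_of_tendsto_of_le_of_le' tendsto_const_nhds hupper
  · exact Eventually.of_forall hnonneg
  · filter_upwards [eventually_ge_atTop (0:ℝ)] with x hx
    have hb := key x hx
    calc (1 + ∑' n : ℕ, x^(2*n) * Real.exp (x^2/2) /
          ((n+1).factorial * 2^n * n.factorial)) * Real.exp (-(x^2))
        ≤ (1 + Real.exp (x^2/2 + Real.sqrt 2 * x)) * Real.exp (-(x^2)) := by
          gcongr
      _ = Real.exp (-(x^2)) + Real.exp (Real.sqrt 2 * x - x^2/2) := by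
          rw [add_mul, one_mul, ← Real.exp_add]; ring_nf
end

section
/- The function u(x,t) = Σ_{n≥0} (x²/(2t²))^n / (n!)² satisfies the PDE t³·∂/∂t((1/x)·∂u/∂x) + 2u = 0 for all x > 0, t > 0, together with u(0⁺, t) = 1·(series value at x=0) and the equation t³ δ_x u_t = −2u where δ_x = (1/x)∂/∂x. -/
open Real

/-- The series solution of the PDE `t³ δ_x u_t + 2u = 0`. -/
noncomputable def uSol (x t : ℝ) : ℝ :=
  ∑' n : ℕ, (x^2 / (2*t^2))^n / ((n.factorial : ℝ))^2

namespace USolAux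

set_option maxHeartbeats 1000000

noncomputable def fc (n : ℕ) : ℝ := ((n.factorial : ℝ) * (n.factorial : ℝ))⁻¹
noncomputable def gc (n : ℕ) : ℝ := ((n.factorial : ℝ) * ((n+1).factorial : ℝ))⁻¹
noncomputable def hc (n : ℕ) : ℝ := ((n.factorial : ℝ) * ((n+2).factorial : ℝ))⁻¹

lemma fact_pos (n : ℕ) : (0:ℝ) < (n.factorial : ℝ) := by
  exact_mod_cast n.factorial_pos

lemma fact_ne (n : ℕ) : ((n.factorial : ℝ)) ≠ 0 := (fact_pos n).ne'

lemma one_le_fact (n : ℕ) : (1:ℝ) ≤ (n.factorial : ℝ) := by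
  exact_mod_cast Nat.one_le_iff_ne_zero.mpr n.factorial_ne_zero

lemma inv_mul_le (a b : ℝ) (ha : 1 ≤ a) (hb : 1 ≤ b) : |(a*b)⁻¹| ≤ a⁻¹ := by
  have ha0 : 0 < a := lt_of_lt_of_le one_pos ha
  have hb0 : 0 < b := lt_of_lt_of_le one_pos hb
  rw [abs_of_nonneg (by positivity), mul_inv]
  have hb1 : b⁻¹ ≤ 1 := by rw [inv_eq_one_div, div_le_one hb0]; exact hb
  calc a⁻¹ * b⁻¹ ≤ a⁻¹ * 1 := by
        exact mul_le_mul_of_nonneg_left hb1 (by positivity)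
    _ = a⁻¹ := mul_one _

lemma fc_bound (n : ℕ) : |fc n| ≤ ((n.factorial : ℝ))⁻¹ :=
  inv_mul_le _ _ (one_le_fact n) (one_le_fact n)

lemma gc_bound (n : ℕ) : |gc n| ≤ ((n.factorial : ℝ))⁻¹ :=
  inv_mul_le _ _ (one_le_fact n) (one_le_fact (n+1))

lemma hc_bound (n : ℕ) : |hc n| ≤ ((n.factorial : ℝ))⁻¹ :=
  inv_mul_le _ _ (one_le_fact n) (one_le_fact (n+2))

lemma gc_eq (n : ℕ) : gc n = ((n:ℝ)+1) * fc (n+1) := by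
  rw [gc, fc]
  have h : (((n+1).factorial : ℝ)) = ((n:ℝ)+1) * (n.factorial : ℝ) := by
    rw [Nat.factorial_succ]; push_cast; ring
  rw [h]
  have h1 := fact_ne n
  have h2 : ((n:ℝ)+1) ≠ 0 := by positivity
  field_simp

lemma hc_eq (n : ℕ) : hc n = ((n:ℝ)+1) * gc (n+1) := by
  rw [hc, gc]
  have h : (((n+2).factorial : ℝ)) = ((n:ℝ)+2) * ((n+1).factorial : ℝ) := by
    rw [show n+2 = (n+1)+1 from rfl, Nat.factorial_succ]; push_cast; ring
  have h1 : (((n+1).factorial : ℝ)) = ((n:ℝ)+1) * (n.factorial : ℝ) := by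
    rw [Nat.factorial_succ]; push_cast; ring
  rw [h, h1]
  have := fact_ne n
  have e1 : ((n:ℝ)+1) ≠ 0 := by positivity
  have e2 : ((n:ℝ)+2) ≠ 0 := by positivity
  field_simp

lemma fc_succ_eq (n : ℕ) : fc (n+1) = hc n + gc (n+1) := by
  rw [fc, hc, gc]
  have h2 : (((n+2).factorial : ℝ)) = ((n:ℝ)+2) * ((n+1).factorial : ℝ) := by
    rw [show n+2 = (n+1)+1 from rfl, Nat.factorial_succ]; push_cast; ring
  have h1 : (((n+1).factorial : ℝ)) = ((n:ℝ)+1) * (n.factorial : ℝ) := by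
    rw [Nat.factorial_succ]; push_cast; ring
  have := fact_ne n
  have e1 : ((n:ℝ)+1) ≠ 0 := by positivity
  have e2 : ((n:ℝ)+2) ≠ 0 := by positivity
  rw [h2, h1]
  field_simp
  ring

lemma summable_aux (c : ℕ → ℝ) (hc : ∀ n, |c n| ≤ ((n.factorial : ℝ))⁻¹) (z : ℝ) :
    Summable (fun n : ℕ => c n * z^n) := by
  apply Summable.of_norm_bounded (g := fun n => |z|^n / n.factorial)
    (Real.summable_pow_div_factorial |z|)
  intro n
  rw [norm_mul, norm_pow, Real.norm_eq_abs, Real.norm_eq_abs, div_eq_mul_inv, mul_comm (|z|^n)]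
  exact mul_le_mul (hc n) (le_refl _) (by positivity) (by positivity)

lemma deriv_bound (c : ℕ → ℝ) (hc : ∀ n, |c n| ≤ ((n.factorial : ℝ))⁻¹)
    (R : ℝ) (hR1 : 1 ≤ R) (n : ℕ) (w : ℝ) (hwR : |w| ≤ R) :
    ‖c n * ((n:ℝ) * w^(n-1))‖ ≤ (2*R)^n / (n.factorial : ℝ) := by
  have hR0 : (0:ℝ) < R := lt_of_lt_of_le one_pos hR1
  rw [Real.norm_eq_abs, abs_mul, abs_mul, abs_pow, Nat.abs_cast]
  calc |c n| * ((n:ℝ) * |w|^(n-1))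
      ≤ ((n.factorial:ℝ))⁻¹ * ((2:ℝ)^n * R^n) := by
        apply mul_le_mul (hc n) ?_ (by positivity) (by positivity)
        apply mul_le_mul ?_ ?_ (by positivity) (by positivity)
        · exact_mod_cast (Nat.lt_two_pow_self (n := n)).le
        · calc |w|^(n-1) ≤ R^(n-1) := pow_le_pow_left₀ (abs_nonneg w) hwR _
            _ ≤ R^n := pow_le_pow_right₀ hR1 (Nat.sub_le n 1)
    _ = (2*R)^n / (n.factorial:ℝ) := by rw [mul_pow]; ring

lemma hasDerivAt_aux (c d : ℕ → ℝ) (hc : ∀ n, |c n| ≤ ((n.factorial : ℝ))⁻¹)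
    (hd : ∀ n, d n = ((n:ℝ)+1) * c (n+1)) (z : ℝ) :
    HasDerivAt (fun w => ∑' n : ℕ, c n * w^n) (∑' n : ℕ, d n * z^n) z := by
  set R : ℝ := |z| + 1 with hR
  have hR1 : (1:ℝ) ≤ R := by rw [hR]; linarith [abs_nonneg z]
  have hzR : z ∈ Set.Ioo (-R) R := by
    constructor
    · nlinarith [abs_nonneg z, neg_abs_le z]
    · nlinarith [le_abs_self z]
  have key : HasDerivAt (fun w => ∑' n : ℕ, c n * w^n)
      (∑' n : ℕ, c n * ((n:ℝ) * z^(n-1))) z := by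
    refine hasDerivAt_tsum_of_isPreconnected
      (Real.summable_pow_div_factorial (2*R)) isOpen_Ioo isPreconnected_Ioo
      (g' := fun (n : ℕ) (w : ℝ) => c n * ((n:ℝ) * w^(n-1)))
      ?_ ?_ hzR (summable_aux c hc z) hzR
    · intro n w _
      exact (hasDerivAt_pow n w).const_mul (c n)
    · intro n w hw
      exact deriv_bound c hc R hR1 n w (by rw [abs_le]; exact ⟨hw.1.le, hw.2.le⟩)
  have hsum : Summable (fun n : ℕ => c n * ((n:ℝ) * z^(n-1))) := by
    apply Summable.of_norm_bounded (g := fun n => (2*R)^n / n.factorial)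
      (Real.summable_pow_div_factorial (2*R))
    intro n
    exact deriv_bound c hc R hR1 n z (by rw [hR]; nlinarith [abs_nonneg z])
  have heq : (∑' n : ℕ, c n * ((n:ℝ) * z^(n-1))) = ∑' n : ℕ, d n * z^n := by
    rw [hsum.tsum_eq_zero_add]
    simp only [Nat.cast_zero, zero_mul, mul_zero, zero_add, Nat.add_sub_cancel]
    apply tsum_congr
    intro n
    rw [hd n]
    push_cast
    ring
  exact heq ▸ key

noncomputable def FF (z : ℝ) : ℝ := ∑' n : ℕ, fc n * z^n
noncomputable def GG (z : ℝ) : ℝ := ∑' n : ℕ, gc n * z^n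
noncomputable def HH (z : ℝ) : ℝ := ∑' n : ℕ, hc n * z^n

lemma hasDerivAt_FF (z : ℝ) : HasDerivAt FF (GG z) z :=
  hasDerivAt_aux fc gc fc_bound gc_eq z

lemma hasDerivAt_GG (z : ℝ) : HasDerivAt GG (HH z) z :=
  hasDerivAt_aux gc hc gc_bound hc_eq z

lemma fc_zero : fc 0 = 1 := by simp [fc]

lemma gc_zero : gc 0 = 1 := by simp [gc]

lemma identity (z : ℝ) : FF z = z * HH z + GG z := by
  have hF := summable_aux fc fc_bound z
  have hG := summable_aux gc gc_bound z
  have hH := summable_aux hc hc_bound z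
  have S1 : Summable (fun n : ℕ => hc n * z^(n+1)) := by
    apply Summable.congr (hH.mul_left z)
    intro n; ring
  have S2 : Summable (fun n : ℕ => gc (n+1) * z^(n+1)) :=
    (summable_nat_add_iff 1).2 hG
  have hzH : z * HH z = ∑' n : ℕ, hc n * z^(n+1) := by
    rw [HH, ← tsum_mul_left]
    apply tsum_congr; intro n; ring
  rw [FF, hF.tsum_eq_zero_add, hzH, GG, hG.tsum_eq_zero_add]
  rw [show (∑' n : ℕ, hc n * z^(n+1)) + (gc 0 * z^0 + ∑' n : ℕ, gc (n+1) * z^(n+1))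
      = gc 0 * z^0 + ((∑' n : ℕ, hc n * z^(n+1)) + ∑' n : ℕ, gc (n+1) * z^(n+1)) from by ring]
  rw [← S1.tsum_add S2, fc_zero, gc_zero]
  congr 1
  apply tsum_congr
  intro n
  rw [fc_succ_eq n]
  ring

lemma uSol_eq (x t : ℝ) : uSol x t = FF (x^2/(2*t^2)) := by
  rw [uSol, FF]
  apply tsum_congr
  intro n
  rw [fc, pow_two, div_eq_mul_inv, mul_comm, pow_two]

end USolAux

theorem uSol_satisfies_PDE :
    (∀ x t : ℝ, 0 < x → 0 < t →
      t^3 * ((1/x) * deriv (fun y => deriv (fun τ => uSol y τ) t) x) = -2 * uSol x t) ∧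
    (∀ t : ℝ, 0 < t → uSol 0 t = 1) := by
  constructor
  · intro x t hx ht
    have ht0 : t ≠ 0 := ht.ne'
    have hx0 : x ≠ 0 := hx.ne'
    have hinner : ∀ y : ℝ, deriv (fun τ => uSol y τ) t
        = USolAux.GG (y^2/(2*t^2)) * (-(y^2)/t^3) := by
      intro y
      have hden : HasDerivAt (fun τ : ℝ => 2*τ^2) (2*((2:ℕ)*t^(2-1))) t :=
        (hasDerivAt_pow 2 t).const_mul 2
      have hw : HasDerivAt (fun τ : ℝ => y^2/(2*τ^2)) (-(y^2)/t^3) t := by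
        have h := (hasDerivAt_const t (y^2)).div hden (by positivity)
        refine h.congr_deriv ?_
        push_cast
        field_simp
        ring
      have hcomp := (USolAux.hasDerivAt_FF (y^2/(2*t^2))).comp t hw
      have hfe : (fun τ => uSol y τ) = (USolAux.FF ∘ fun τ : ℝ => y^2/(2*τ^2)) :=
        funext fun τ => USolAux.uSol_eq y τ
      rw [hfe]
      exact hcomp.deriv
    have hin : HasDerivAt (fun y : ℝ => y^2/(2*t^2)) (x/t^2) x := by
      have h := (hasDerivAt_pow 2 x).div_const (2*t^2)
      refine h.congr_deriv ?_
      push_cast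
      field_simp
    have hG1 : HasDerivAt (fun y : ℝ => USolAux.GG (y^2/(2*t^2)))
        (USolAux.HH (x^2/(2*t^2)) * (x/t^2)) x :=
      by have h := (USolAux.hasDerivAt_GG (x^2/(2*t^2))).comp x hin; exact h
    have hq : HasDerivAt (fun y : ℝ => -(y^2)/t^3) (-(2*x)/t^3) x := by
      have h := ((hasDerivAt_pow 2 x).neg).div_const (t^3)
      refine h.congr_deriv ?_
      push_cast
      ring
    have houter : HasDerivAt (fun y => USolAux.GG (y^2/(2*t^2)) * (-(y^2)/t^3)) _ x := hG1.mul hq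
    have hfun : (fun y => deriv (fun τ => uSol y τ) t)
        = fun y => USolAux.GG (y^2/(2*t^2)) * (-(y^2)/t^3) := funext hinner
    rw [hfun, houter.deriv, USolAux.uSol_eq x t, USolAux.identity (x^2/(2*t^2))]
    field_simp
    ring
  · intro t ht
    have ht2 : (2*t^2) ≠ 0 := by positivity
    rw [uSol, tsum_eq_single 0]
    · norm_num
    · intro n hn
      have : ((0:ℝ)^2 / (2*t^2)) = 0 := by norm_num
      rw [this, zero_pow hn, zero_div]
end
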